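/- arXiv:1804.00976 — 3 statements merged into one kernel-verified Lean document; each statement's English description precedes it below -/
import Mathlib

section
/- Let G = (V, E, w) be a weighted directed graph with complex-valued (constant) edge weights, and let S ⊊ S' ⊊ V with S a structural set of G. Then S is also a structural set of the isospectral reduction R_{S'}(G) of G onto S'. -/
/-- A cycle of the edge relation `E` based at `v`, with remaining vertices `l`:
the vertices `v :: l` are distinct and consecutive vertices (cyclically) are joined by
edges.  The cycle is a loop exactly when `l = []`. -/
def IsCycleFrom {V : Type*} (E : V → V → Prop) (v : V) (l : List V) : Prop :=
  List.Chain E v (l ++ [v]) ∧ (v :: l).Nodup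

/-- `S` is a structural set for the weighted directed graph with weights
`w : V → V → RatFunc ℂ` (edges are the pairs with nonzero weight): `S` is nonempty, every
cycle that is not a loop contains a vertex of `S`, and `w i i ≠ λ` for every `i ∉ S`. -/
def IsStructuralSet {V : Type*} (w : V → V → RatFunc ℂ) (S : Set V) : Prop :=
  S.Nonempty ∧
  (∀ v l, IsCycleFrom (fun a b => w a b ≠ 0) v l → l ≠ [] → ∃ u ∈ v :: l, u ∈ S) ∧
  ∀ i, i ∉ S → w i i ≠ RatFunc.X

/-- The weight `w(β, λ)` of a branch `β = (i, l..., j)` with interior vertices `l`,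
for constant complex edge weights `w`:
`w(i₀,i₁) ∏_{l=1}^{p-1} w(i_l, i_{l+1})/(λ - w(i_l,i_l))`. -/
noncomputable def branchWeight {V : Type*} (w : V → V → ℂ) : V → List V → V → RatFunc ℂ
  | i, [], j => RatFunc.C (w i j)
  | i, a :: t, j =>
      RatFunc.C (w i a) * branchWeight w a t j / (RatFunc.X - RatFunc.C (w a a))

/-- `(i, l..., j)` is a branch of `(G, S')`: consecutive vertices are joined by edges of `G`,
and the interior vertices `l` are distinct and lie outside `S'`. -/
def IsBranchInterior {V : Type*} {W : Type*} [Zero W] (w : V → V → W) (S' : Set V)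
    (i : V) (l : List V) (j : V) : Prop :=
  List.Chain (fun a b => w a b ≠ 0) i (l ++ [j]) ∧ l.Nodup ∧ ∀ v ∈ l, v ∉ S'

open Classical in
/-- The entry `R_{i,j}(G, S', λ)` of the isospectral reduction of the graph with constant
complex weights `w` onto `S'`: the sum of the weights of all branches from `i` to `j` with
interior vertices outside `S'`. -/
noncomputable def reducedWeight {V : Type*} [Fintype V] [DecidableEq V]
    (w : V → V → ℂ) (S' : Set V) (i j : V) : RatFunc ℂ :=
  ∑ l : {l : List V // l.Nodup},
    if IsBranchInterior w S' i l.1 j then branchWeight w i l.1 j else 0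

/- ### Combinatorial auxiliary lemmas -/

lemma aux_dup_decomp {α : Type*} : ∀ (L : List α), ¬ L.Nodup →
    ∃ a L₁ L₂ L₃, L = L₁ ++ a :: L₂ ++ a :: L₃ := by
  intro L
  induction L with
  | nil => intro h; exact absurd List.nodup_nil h
  | cons x L ih =>
    intro h
    by_cases hx : x ∈ L
    · obtain ⟨s, t, rfl⟩ := List.append_of_mem hx
      exact ⟨x, [], s, t, rfl⟩
    · have : ¬ L.Nodup := fun hn => h (List.nodup_cons.mpr ⟨hx, hn⟩)
      obtain ⟨a, L₁, L₂, L₃, rfl⟩ := ih this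
      exact ⟨a, x :: L₁, L₂, L₃, rfl⟩

lemma aux_extract_cycle {α : Type*} (E : α → α → Prop) :
    ∀ (n : ℕ) (L : List α), L.length ≤ n → L.Chain' E → L.Chain' (· ≠ ·) → ¬ L.Nodup →
    ∃ u l, IsCycleFrom E u l ∧ l ≠ [] ∧ ∀ x ∈ u :: l, x ∈ L := by
  intro n
  induction n with
  | zero =>
    intro L hL _ _ hd
    rw [Nat.le_zero, List.length_eq_zero_iff] at hL
    subst hL
    exact absurd List.nodup_nil hd
  | succ n ih =>
    intro L hL hE hNe hd
    obtain ⟨a, L₁, L₂, L₃, rfl⟩ := aux_dup_decomp L hd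
    have hinf : (a :: (L₂ ++ [a])) <:+: (L₁ ++ a :: L₂ ++ a :: L₃) :=
      ⟨L₁, L₃, by simp⟩
    have hEc : (a :: (L₂ ++ [a])).Chain' E := hE.infix hinf
    have hNec : (a :: (L₂ ++ [a])).Chain' (· ≠ ·) := hNe.infix hinf
    have hL₂ : L₂ ≠ [] := by
      rintro rfl
      simp only [List.nil_append, List.Chain', List.isChain_cons_cons] at hNec
      exact hNec.1 rfl
    by_cases hnd : (a :: L₂).Nodup
    · refine ⟨a, L₂, ⟨hEc, hnd⟩, hL₂, ?_⟩
      intro x hx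
      have hx' : x ∈ a :: (L₂ ++ [a]) := by
        rcases List.mem_cons.mp hx with h | h
        · exact h ▸ List.mem_cons_self
        · exact List.mem_cons_of_mem _ (List.mem_append_left _ h)
      exact hinf.subset hx'
    · have hinf2 : (a :: L₂) <:+: (L₁ ++ a :: L₂ ++ a :: L₃) :=
        ⟨L₁, a :: L₃, by simp⟩
      have hlen : (a :: L₂).length ≤ n := by
        simp only [List.length_append, List.length_cons] at hL ⊢
        omega
      obtain ⟨u, l, hc, hl, hmem⟩ :=
        ih (a :: L₂) hlen (hE.infix hinf2) (hNe.infix hinf2) hnd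
      exact ⟨u, l, hc, hl, fun x hx => hinf2.subset (hmem x hx)⟩

lemma aux_chain_ne {V : Type*} (S' : Set V) (a b : V) (m : List V)
    (ha : a ∈ S') (hb : b ∈ S') (hm : m.Nodup) (hm' : ∀ x ∈ m, x ∉ S') (hab : a ≠ b) :
    List.Chain (· ≠ ·) a (m ++ [b]) := by
  have h1 : ((a :: m) ++ [b]).Chain' (· ≠ ·) := by
    rw [List.Chain', List.isChain_append]
    refine ⟨?_, by simp, ?_⟩
    · have hnd : (a :: m).Nodup := List.nodup_cons.mpr ⟨fun h => hm' a h ha, hm⟩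
      exact List.Pairwise.isChain hnd
    · intro x hx y hy
      simp only [List.head?_cons, Option.mem_def, Option.some.injEq] at hy
      subst hy
      rcases List.mem_cons.mp (List.mem_of_mem_getLast? hx) with h | h
      · exact h ▸ hab
      · rintro rfl; exact hm' _ h hb
  simpa [List.Chain, List.Chain'] using h1

/-- Lift a chain in the reduced graph to a walk in the original graph. -/
lemma aux_lift_walk {V : Type*} (E : V → V → Prop) (S' : Set V)
    (Red : V → V → Prop)
    (hR : ∀ a b, Red a b → ∃ m, List.Chain E a (m ++ [b]) ∧ m.Nodup ∧ ∀ x ∈ m, x ∉ S') :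
    ∀ (q : List V) (a c : V), a ∈ S' → c ∈ S' → (∀ x ∈ q, x ∈ S') →
      List.Chain Red a (q ++ [c]) → (a :: (q ++ [c])).Chain' (· ≠ ·) →
      ∃ M : List V, List.Chain E a (M ++ [c]) ∧ (a :: (M ++ [c])).Chain' (· ≠ ·) ∧
        ∀ x ∈ M, x ∈ q ∨ x ∉ S' := by
  intro q
  induction q with
  | nil =>
    intro a c ha hc' _ hch hne
    simp only [List.nil_append, List.Chain, List.chain_cons] at hch
    obtain ⟨m, hm1, hm2, hm3⟩ := hR a c hch.1
    have hac : a ≠ c := by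
      simp only [List.nil_append, List.Chain', List.isChain_cons_cons] at hne
      exact hne.1
    exact ⟨m, hm1, aux_chain_ne S' a c m ha hc' hm2 hm3 hac, fun x hx => Or.inr (hm3 x hx)⟩
  | cons b q' ih =>
    intro a c ha hc' hq hch hne
    simp only [List.cons_append, List.Chain, List.chain_cons] at hch
    obtain ⟨m, hm1, hm2, hm3⟩ := hR a b hch.1
    have hb : b ∈ S' := hq b (List.mem_cons_self)
    have hab : a ≠ b := by
      simp only [List.cons_append, List.Chain', List.isChain_cons_cons] at hne
      exact hne.1
    have hne' : (b :: (q' ++ [c])).Chain' (· ≠ ·) := by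
      simp only [List.cons_append, List.Chain', List.isChain_cons_cons] at hne
      exact hne.2
    obtain ⟨M', hM1, hM2, hM3⟩ :=
      ih b c hb hc' (fun x hx => hq x (List.mem_cons_of_mem _ hx)) hch.2 hne'
    refine ⟨m ++ b :: M', ?_, ?_, ?_⟩
    · have heq : (m ++ b :: M') ++ [c] = m ++ b :: (M' ++ [c]) := by simp
      rw [heq]; simp only [List.Chain]; rw [List.isChain_cons_split]
      exact ⟨hm1, hM1⟩
    · show List.Chain (· ≠ ·) a ((m ++ b :: M') ++ [c])
      have heq : (m ++ b :: M') ++ [c] = m ++ b :: (M' ++ [c]) := by simp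
      rw [heq]; simp only [List.Chain]; rw [List.isChain_cons_split]
      exact ⟨aux_chain_ne S' a b m ha hb hm2 hm3 hab, hM2⟩
    · intro x hx
      rcases List.mem_append.mp hx with h | h
      · exact Or.inr (hm3 x h)
      · rcases List.mem_cons.mp h with h | h
        · exact Or.inl (h ▸ List.mem_cons_self)
        · rcases hM3 x h with h' | h'
          · exact Or.inl (List.mem_cons_of_mem _ h')
          · exact Or.inr h'

/- ### Degree auxiliary lemmas -/

lemma aux_X_sub_C_eq (c : ℂ) :
    (RatFunc.X - RatFunc.C c : RatFunc ℂ) =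
      algebraMap (Polynomial ℂ) (RatFunc ℂ) (Polynomial.X - Polynomial.C c) := by
  rw [map_sub, RatFunc.algebraMap_X, RatFunc.algebraMap_C]

lemma aux_intDegree_X_sub_C (c : ℂ) :
    (RatFunc.X - RatFunc.C c : RatFunc ℂ).intDegree = 1 := by
  rw [aux_X_sub_C_eq, RatFunc.intDegree_polynomial, Polynomial.natDegree_X_sub_C]
  rfl

lemma aux_X_sub_C_ne (c : ℂ) : (RatFunc.X - RatFunc.C c : RatFunc ℂ) ≠ 0 := by
  intro h
  have := aux_intDegree_X_sub_C c
  rw [h, RatFunc.intDegree_zero] at this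
  exact absurd this (by norm_num)

lemma aux_branch_deg {V : Type*} (w : V → V → ℂ) :
    ∀ (l : List V) (i j : V), (branchWeight w i l j).intDegree ≤ 0 := by
  intro l
  induction l with
  | nil => intro i j; simp [branchWeight, RatFunc.intDegree_C]
  | cons a t ih =>
    intro i j
    by_cases hf : branchWeight w i (a :: t) j = 0
    · rw [hf, RatFunc.intDegree_zero]
    · have hbw : branchWeight w i (a :: t) j =
          RatFunc.C (w i a) * branchWeight w a t j * (RatFunc.X - RatFunc.C (w a a))⁻¹ := by
        rw [branchWeight, div_eq_mul_inv]
      have hd : (RatFunc.X - RatFunc.C (w a a) : RatFunc ℂ) ≠ 0 := aux_X_sub_C_ne _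
      have hdi : ((RatFunc.X - RatFunc.C (w a a) : RatFunc ℂ))⁻¹ ≠ 0 := inv_ne_zero hd
      have hp : RatFunc.C (w i a) * branchWeight w a t j ≠ 0 := by
        intro h
        rw [hbw, h, zero_mul] at hf
        exact hf rfl
      have hC : (RatFunc.C (w i a) : RatFunc ℂ) ≠ 0 := left_ne_zero_of_mul hp
      have hb : branchWeight w a t j ≠ 0 := right_ne_zero_of_mul hp
      have hinv : ((RatFunc.X - RatFunc.C (w a a) : RatFunc ℂ))⁻¹.intDegree = -1 := by
        have h1 : (RatFunc.X - RatFunc.C (w a a) : RatFunc ℂ) *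
            (RatFunc.X - RatFunc.C (w a a))⁻¹ = 1 := mul_inv_cancel₀ hd
        have h2 := RatFunc.intDegree_mul hd hdi
        rw [h1, RatFunc.intDegree_one, aux_intDegree_X_sub_C] at h2
        omega
      rw [hbw, RatFunc.intDegree_mul hp hdi, RatFunc.intDegree_mul hC hb,
        RatFunc.intDegree_C, hinv]
      have := ih a j
      omega

lemma aux_sum_deg {ι : Type*} (s : Finset ι) (f : ι → RatFunc ℂ)
    (h : ∀ x ∈ s, (f x).intDegree ≤ 0) : (∑ x ∈ s, f x).intDegree ≤ 0 := by
  induction s using Finset.cons_induction with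
  | empty => simp [RatFunc.intDegree_zero]
  | cons a s ha ih =>
    rw [Finset.sum_cons]
    by_cases h0 : f a + ∑ x ∈ s, f x = 0
    · rw [h0, RatFunc.intDegree_zero]
    · by_cases hr : ∑ x ∈ s, f x = 0
      · rw [hr, add_zero]; exact h a (Finset.mem_cons_self _ _)
      · refine le_trans (RatFunc.intDegree_add_le hr h0) (max_le ?_ ?_)
        · exact h a (Finset.mem_cons_self _ _)
        · exact ih fun x hx => h x (Finset.mem_cons_of_mem hx)

/-- for a weighted directed graph with constant complex edge weights and
`S ⊊ S' ⊊ V` with `S` a structural set of `G`, the set `S` is also a structural set of the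
isospectral reduction `R_{S'}(G)` of `G` onto `S'`. -/
theorem stmt4 {V : Type*} [Fintype V] [DecidableEq V]
    (w : V → V → ℂ) (S S' : Set V)
    (h1 : S ⊂ S') (h2 : S' ⊂ Set.univ)
    (hS : IsStructuralSet (fun i j => RatFunc.C (w i j)) S) :
    IsStructuralSet (fun i j : S' => reducedWeight w S' i.1 j.1) {v : S' | v.1 ∈ S} := by
  obtain ⟨hne, hcyc, hdiag⟩ := hS
  refine ⟨?_, ?_, ?_⟩
  · obtain ⟨s, hs⟩ := hne
    exact ⟨⟨s, h1.subset hs⟩, hs⟩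
  · -- cycles
    rintro v l ⟨hch, hnd⟩ hlne
    by_contra hcon
    push_neg at hcon
    simp only [Set.mem_setOf_eq] at hcon
    set E : V → V → Prop := fun a b => w a b ≠ 0 with hE
    set Red : V → V → Prop := fun a b =>
      ∃ m, List.Chain E a (m ++ [b]) ∧ m.Nodup ∧ ∀ x ∈ m, x ∉ S' with hRed
    have hbranch : ∀ a b : S', reducedWeight w S' a.1 b.1 ≠ 0 → Red a.1 b.1 := by
      intro a b hab
      obtain ⟨m, hm⟩ := Finset.exists_ne_zero_of_sum_ne_zero hab
      by_cases hc : IsBranchInterior w S' a.1 m.1 b.1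
      · exact ⟨m.1, hc.1, hc.2.1, hc.2.2⟩
      · rw [if_neg hc] at hm
        exact absurd rfl hm.2
    set q : List V := l.map Subtype.val with hq
    have hchain : List.Chain Red v.1 (q ++ [v.1]) := by
      have h := List.isChain_cons_map_of_isChain_cons (S := Red) Subtype.val
        (fun a b hab => hbranch a b hab) hch
      simpa [hq, List.Chain] using h
    have hqnd : (v.1 :: q).Nodup := by
      have : ((v :: l).map Subtype.val).Nodup := hnd.map Subtype.val_injective
      simpa [hq] using this
    have hvq : v.1 ∉ q := (List.nodup_cons.mp hqnd).1
    have hNe : (v.1 :: (q ++ [v.1])).Chain' (· ≠ ·) := by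
      have h1' : ((v.1 :: q) ++ [v.1]).Chain' (· ≠ ·) := by
        rw [List.Chain', List.isChain_append]
        refine ⟨List.Pairwise.isChain hqnd, by simp, ?_⟩
        intro x hx y hy
        simp only [List.head?_cons, Option.mem_def, Option.some.injEq] at hy
        subst hy
        obtain ⟨b, q'', hq''⟩ : ∃ b q'', q = b :: q'' := by
          cases hq' : q with
          | nil =>
            exfalso
            rw [hq] at hq'
            exact hlne (List.map_eq_nil_iff.mp hq')
          | cons b q'' => exact ⟨b, q'', rfl⟩
        rw [hq'', List.getLast?_cons_cons] at hx
        have hxq : x ∈ q := hq'' ▸ List.mem_of_mem_getLast? hx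
        intro hxy
        exact hvq (hxy ▸ hxq)
      simpa using h1'
    have hqS' : ∀ x ∈ q, x ∈ S' := by
      intro x hx
      obtain ⟨y, _, rfl⟩ := List.mem_map.mp hx
      exact y.2
    obtain ⟨M, hM1, hM2, hM3⟩ :=
      aux_lift_walk E S' Red (fun a b h => h) q v.1 v.1 v.2 v.2 hqS' hchain hNe
    set L : List V := v.1 :: (M ++ [v.1]) with hL
    have hLE : L.Chain' E := hM1
    have hLNe : L.Chain' (· ≠ ·) := hM2
    have hLnd : ¬ L.Nodup := by
      intro h
      exact (List.nodup_cons.mp h).1 (List.mem_append_right _ (List.mem_singleton_self _))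
    obtain ⟨u, l', ⟨hc', hnd'⟩, hl'ne, hmem'⟩ :=
      aux_extract_cycle E L.length L le_rfl hLE hLNe hLnd
    have hc'' : IsCycleFrom (fun a b => RatFunc.C (w a b) ≠ 0) u l' := by
      refine ⟨List.IsChain.imp ?_ hc', hnd'⟩
      intro a b hab hzero
      apply hab
      have h0 : RatFunc.C (w a b) = RatFunc.C 0 := by rw [hzero, map_zero]
      exact RingHom.injective (RatFunc.C : ℂ →+* RatFunc ℂ) h0
    obtain ⟨u', hu'mem, hu'S⟩ := hcyc u l' hc'' hl'ne
    have hu'L : u' ∈ L := hmem' u' hu'mem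
    rw [hL] at hu'L
    rcases List.mem_cons.mp hu'L with h | h
    · exact hcon v (List.mem_cons_self) (h ▸ hu'S)
    · rcases List.mem_append.mp h with h | h
      · rcases hM3 u' h with h' | h'
        · obtain ⟨y, hy, rfl⟩ := List.mem_map.mp (hq ▸ h')
          exact hcon y (List.mem_cons_of_mem _ hy) hu'S
        · exact h' (h1.subset hu'S)
      · rw [List.mem_singleton] at h
        exact hcon v (List.mem_cons_self) (h ▸ hu'S)
  · -- diagonal
    rintro i hiS heq
    have hdeg : (reducedWeight w S' i.1 i.1).intDegree ≤ 0 := by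
      apply aux_sum_deg
      intro x _
      by_cases hc : IsBranchInterior w S' i.1 x.1 i.1
      · rw [if_pos hc]; exact aux_branch_deg w x.1 i.1 i.1
      · rw [if_neg hc, RatFunc.intDegree_zero]
    rw [show reducedWeight w S' i.1 i.1 = (fun i j : S' => reducedWeight w S' i.1 j.1) i i
      from rfl, heq, RatFunc.intDegree_X] at hdeg
    exact absurd hdeg (by norm_num)
end

section
/- There exists an undirected graph on 11 vertices in which every vertex has degree 4 but the betweenness centrality is not constant across vertices; hence a graph can be an attractor for degree-based reduction while not being an attractor for centrality-based reduction. -/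
open Classical in
/-- `σ_{st}(v)`: the number of shortest paths from `s` to `t` that pass through `v`
(zero when `v ∈ {s,t}`). -/
noncomputable def sigmaThrough {V : Type*} (G : SimpleGraph V) (s t v : V) : ℕ :=
  if v = s ∨ v = t then 0
  else {p : G.Walk s t | p.IsPath ∧ p.length = G.dist s t ∧ v ∈ p.support}.ncard

/-- The betweenness centrality `g(v) = Σ_{s ≠ v} Σ_{t ≠ v, s} σ_{st}(v)`. -/
noncomputable def betweenness {V : Type*} [Fintype V] [DecidableEq V]
    (G : SimpleGraph V) (v : V) : ℕ :=
  ∑ s ∈ Finset.univ.filter (fun s => s ≠ v),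
    ∑ t ∈ Finset.univ.filter (fun t => t ≠ v ∧ t ≠ s),
      sigmaThrough G s t v

def myG : SimpleGraph (Fin 11) where
  Adj i j := i ≠ j ∧ (i.val < 5 ↔ j.val < 5) ∧ (i.val % 3 ≠ j.val % 3 ∨ i.val < 5)
  symm := by
    constructor
    rintro i j ⟨h1, h2, h3⟩
    exact ⟨fun e => h1 e.symm, h2.symm, by omega⟩
  loopless := by constructor; rintro i ⟨h1, _⟩; exact h1 rfl

instance : DecidableRel myG.Adj := fun i j => by unfold myG; infer_instance

lemma block_of_mem_support : ∀ {a c : Fin 11} (p : myG.Walk a c),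
    ∀ x ∈ p.support, (x.val < 5 ↔ a.val < 5) := by
  intro a c p
  induction p with
  | nil => intro x hx; simp at hx; subst hx; rfl
  | cons h q ih =>
    intro x hx
    rw [SimpleGraph.Walk.support_cons, List.mem_cons] at hx
    rcases hx with rfl | hx
    · rfl
    · exact (ih x hx).trans (h.2.1.symm)

lemma degrees : ∀ v, (myG.neighborSet v).ncard = 4 := by
  intro v
  rw [Set.ncard_eq_toFinset_card']
  revert v; decide

/-- there is an undirected graph on 11 vertices in which every vertex has
degree 4 but the betweenness centrality is not constant: a graph can be an attractor for
degree-based reduction while not being an attractor for centrality-based reduction. -/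
theorem stmt7 :
    ∃ G : SimpleGraph (Fin 11),
      (∀ v, (G.neighborSet v).ncard = 4) ∧
      ∃ u v : Fin 11, betweenness G u ≠ betweenness G v := by

  refine ⟨myG, degrees, 5, 0, ?_⟩
  have hzero : betweenness myG 0 = 0 := by
    unfold betweenness
    refine Finset.sum_eq_zero fun s hs => Finset.sum_eq_zero fun t ht => ?_
    simp only [Finset.mem_filter] at hs ht
    unfold sigmaThrough
    rw [if_neg (by push_neg; exact ⟨Ne.symm hs.2, Ne.symm ht.2.1⟩)]
    have hfin : {p : myG.Walk s t | p.IsPath ∧ p.length = myG.dist s t ∧ (0:Fin 11) ∈ p.support}.Finite :=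
      Set.Finite.subset (Set.toFinite {p : myG.Walk s t | p.IsPath ∧ p.length = myG.dist s t})
        (fun q hq => ⟨hq.1, hq.2.1⟩)
    rw [Set.ncard_eq_zero hfin]
    ext p; simp only [Set.mem_setOf_eq, Set.mem_empty_iff_false, iff_false]
    rintro ⟨hpath, hlen, hmem⟩
    have h0 : (0 : Fin 11).val < 5 ↔ s.val < 5 := block_of_mem_support p 0 hmem
    have hs5 : s.val < 5 := h0.mp (by norm_num)
    have ht5 : t.val < 5 := (block_of_mem_support p t p.end_mem_support).mpr hs5
    have hadj : myG.Adj s t := ⟨Ne.symm ht.2.2, by simp [hs5, ht5], Or.inr hs5⟩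
    have hd1 : myG.dist s t = 1 := SimpleGraph.dist_eq_one_iff_adj.mpr hadj
    rw [hd1] at hlen
    -- p has length 1, support = [s, t], but 0 ∈ support with 0 ≠ s, 0 ≠ t
    cases p with
    | nil => simp at hlen
    | @cons _ w _ h q =>
      simp only [SimpleGraph.Walk.length_cons] at hlen
      have hlen : q.length = 0 := by omega
      have hwt : w = t := SimpleGraph.Walk.eq_of_length_eq_zero hlen
      have hq : q.support = [w] := by
        have h1 : q.support.length = 1 := by rw [SimpleGraph.Walk.length_support, hlen]
        rcases List.length_eq_one_iff.mp h1 with ⟨a, ha⟩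
        have h2 := q.start_mem_support
        rw [ha] at h2 ⊢
        simp at h2; subst h2; rfl
      rw [SimpleGraph.Walk.support_cons, hq] at hmem
      simp at hmem
      rcases hmem with h' | h'
      · exact hs.2 h'.symm
      · exact ht.2.1 (hwt ▸ h').symm
  have hpos : 1 ≤ betweenness myG 5 := by
    set p : myG.Walk 6 9 :=
      SimpleGraph.Walk.cons (by decide : myG.Adj 6 5)
        (SimpleGraph.Walk.cons (by decide : myG.Adj 5 9) SimpleGraph.Walk.nil) with hp
    have hd : myG.dist 6 9 = 2 := by
      have hle : myG.dist 6 9 ≤ 2 := SimpleGraph.dist_le p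
      have hne : myG.dist 6 9 ≠ 1 := by
        intro h; exact (by decide : ¬ myG.Adj 6 9) (SimpleGraph.dist_eq_one_iff_adj.mp h)
      have hpos' : 0 < myG.dist 6 9 :=
        (SimpleGraph.Walk.reachable p).pos_dist_of_ne (by decide)
      omega
    have hsig : 1 ≤ sigmaThrough myG 6 9 5 := by
      unfold sigmaThrough
      rw [if_neg (by decide)]
      have hpath : p.IsPath := by rw [hp, SimpleGraph.Walk.isPath_def]; decide
      have hlen2 : p.length = myG.dist 6 9 := by rw [hp, hd]; rfl
      have hsup : (5:Fin 11) ∈ p.support := by rw [hp]; decide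
      have hmem : p ∈ {q : myG.Walk 6 9 | q.IsPath ∧ q.length = myG.dist 6 9 ∧ (5:Fin 11) ∈ q.support} :=
        ⟨hpath, hlen2, hsup⟩
      have hfin : {q : myG.Walk 6 9 | q.IsPath ∧ q.length = myG.dist 6 9 ∧ (5:Fin 11) ∈ q.support}.Finite := by
        apply Set.Finite.subset (Set.toFinite {q : myG.Walk 6 9 | q.IsPath ∧ q.length = myG.dist 6 9})
        intro q hq; exact ⟨hq.1, hq.2.1⟩
      have := Set.ncard_pos (s := {q : myG.Walk 6 9 | q.IsPath ∧ q.length = myG.dist 6 9 ∧ (5:Fin 11) ∈ q.support}) hfin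
      exact this.mpr ⟨p, hmem⟩
    calc 1 ≤ sigmaThrough myG 6 9 5 := hsig
      _ ≤ ∑ t ∈ Finset.univ.filter (fun t => t ≠ 5 ∧ t ≠ 6), sigmaThrough myG 6 t 5 :=
          Finset.single_le_sum (f := fun t => sigmaThrough myG 6 t 5) (fun _ _ => Nat.zero_le _)
            (show (9:Fin 11) ∈ Finset.univ.filter (fun t => t ≠ 5 ∧ t ≠ 6) by decide)
      _ ≤ betweenness myG 5 :=
          Finset.single_le_sum (f := fun s => ∑ t ∈ Finset.univ.filter (fun t => t ≠ 5 ∧ t ≠ s), sigmaThrough myG s t 5)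
            (fun _ _ => Nat.zero_le _)
            (show (6:Fin 11) ∈ Finset.univ.filter (fun s => s ≠ 5) by decide)
  rw [hzero]; omega
end

section
/- If all edge weights of G = (V, E, w) are constant complex numbers and S ⊆ V is a structural set, then every entry R_{i,j}(G, S, λ) of the reduced adjacency matrix is a rational function of λ whose denominator divides ∏_{k ∈ V∖S}(λ − w(k,k)) and which is never identically equal to the function λ; in particular the diagonal entries of the reduction satisfy the structural-set condition w̃(i,i) ≠ λ. -/
open Polynomial in
noncomputable def prodl {V : Type*} (w : V → V → ℂ) (l : List V) : Polynomial ℂ :=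
  (l.map (fun a => X - C (w a a))).prod

open Polynomial in
lemma prodl_ne_zero {V : Type*} (w : V → V → ℂ) (l : List V) : prodl w l ≠ 0 := by
  induction l with
  | nil => simp [prodl]
  | cons a t ih =>
    simp only [prodl, List.map_cons, List.prod_cons] at *
    exact mul_ne_zero (X_sub_C_ne_zero _) ih

open Polynomial in
lemma branchWeight_eq {V : Type*} (w : V → V → ℂ) (l : List V) :
    ∀ i j : V, ∃ p : Polynomial ℂ,
      branchWeight w i l j = algebraMap (Polynomial ℂ) (RatFunc ℂ) p /
        algebraMap (Polynomial ℂ) (RatFunc ℂ) (prodl w l) ∧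
      p.degree ≤ (prodl w l).degree := by
  induction l with
  | nil =>
    intro i j
    refine ⟨C (w i j), ?_, ?_⟩
    · simp [branchWeight, prodl, RatFunc.algebraMap_C]
    · simpa [prodl] using degree_C_le
  | cons a t ih =>
    intro i j
    obtain ⟨p, hp, hd⟩ := ih a j
    refine ⟨C (w i a) * p, ?_, ?_⟩
    · have h1 : algebraMap (Polynomial ℂ) (RatFunc ℂ) (X - C (w a a)) ≠ 0 :=
        RatFunc.algebraMap_ne_zero (X_sub_C_ne_zero _)
      have h2 : algebraMap (Polynomial ℂ) (RatFunc ℂ) (prodl w t) ≠ 0 :=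
        RatFunc.algebraMap_ne_zero (prodl_ne_zero w t)
      rw [branchWeight, hp]
      simp only [prodl, List.map_cons, List.prod_cons, map_mul, map_sub,
        RatFunc.algebraMap_C, RatFunc.algebraMap_X] at *
      field_simp
    · have hC : (C (w i a) * p).degree ≤ p.degree := by
        calc (C (w i a) * p).degree ≤ (C (w i a)).degree + p.degree := degree_mul_le _ _
        _ ≤ 0 + p.degree := add_le_add_left degree_C_le _
        _ = p.degree := zero_add _
      have hstep : (prodl w t).degree ≤ (prodl w (a :: t)).degree := by
        have : prodl w (a :: t) = (X - C (w a a)) * prodl w t := by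
          simp [prodl]
        rw [this, degree_mul, degree_X_sub_C]
        exact le_add_of_nonneg_left (by norm_num)
      exact hC.trans (hd.trans hstep)


open Classical in
/-- if all edge weights of `G` are constant complex numbers and `S` is a
structural set, then every entry `R_{i,j}(G,S,λ)` of the reduced adjacency matrix is a
rational function whose denominator divides `∏_{k ∉ S} (λ - w(k,k))` and which is never
identically equal to the function `λ`; in particular the diagonal entries of the reduction
satisfy the structural-set condition `w̃(i,i) ≠ λ`. -/
theorem stmt16 {V : Type*} [Fintype V] [DecidableEq V]
    (w : V → V → ℂ) (S : Set V)
    (hS : IsStructuralSet (fun i j => RatFunc.C (w i j)) S) :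
    ∀ i j : V,
      (reducedWeight w S i j).denom ∣
        ∏ k ∈ Finset.univ.filter (fun k => k ∉ S), (Polynomial.X - Polynomial.C (w k k)) ∧
      reducedWeight w S i j ≠ RatFunc.X := by
  intro i j
  set Q : Polynomial ℂ :=
    ∏ k ∈ Finset.univ.filter (fun k => k ∉ S), (Polynomial.X - Polynomial.C (w k k)) with hQdef
  have hQ : Q ≠ 0 := by
    rw [hQdef]
    exact Finset.prod_ne_zero_iff.mpr fun k _ => Polynomial.X_sub_C_ne_zero _
  have haQ : algebraMap (Polynomial ℂ) (RatFunc ℂ) Q ≠ 0 := RatFunc.algebraMap_ne_zero hQ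
  have key : ∀ l : {l : List V // l.Nodup},
      ∃ p : Polynomial ℂ,
        (if IsBranchInterior w S i l.1 j then branchWeight w i l.1 j else 0) =
          algebraMap (Polynomial ℂ) (RatFunc ℂ) p / algebraMap (Polynomial ℂ) (RatFunc ℂ) Q ∧
        p.degree ≤ Q.degree := by
    intro l
    by_cases hb : IsBranchInterior w S i l.1 j
    · rw [if_pos hb]
      obtain ⟨p, hp, hd⟩ := branchWeight_eq w l.1 i j
      have hdvd : prodl w l.1 ∣ Q := by
        have h1 : prodl w l.1 = l.1.toFinset.prod (fun a => Polynomial.X - Polynomial.C (w a a)) :=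
          (List.prod_toFinset _ hb.2.1).symm
        rw [h1, hQdef]
        refine Finset.prod_dvd_prod_of_subset _ _ _ ?_
        intro a ha
        simp only [Finset.mem_filter, Finset.mem_univ, true_and]
        exact hb.2.2 a (List.mem_toFinset.mp ha)
      obtain ⟨e, he⟩ := hdvd
      have he0 : e ≠ 0 := by rintro rfl; exact hQ (by simp [he])
      have hae : algebraMap (Polynomial ℂ) (RatFunc ℂ) e ≠ 0 := RatFunc.algebraMap_ne_zero he0
      refine ⟨p * e, ?_, ?_⟩
      · rw [hp, he, map_mul, map_mul, mul_div_mul_right _ _ hae]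
      · rw [he, Polynomial.degree_mul, Polynomial.degree_mul]
        exact add_le_add_left hd _
    · exact ⟨0, by rw [if_neg hb]; simp, by simp⟩
  set P : Polynomial ℂ := ∑ l : {l : List V // l.Nodup}, (key l).choose with hPdef
  have hrw : reducedWeight w S i j =
      algebraMap (Polynomial ℂ) (RatFunc ℂ) P / algebraMap (Polynomial ℂ) (RatFunc ℂ) Q := by
    rw [reducedWeight, hPdef, map_sum, Finset.sum_div]
    exact Finset.sum_congr rfl fun l _ => (key l).choose_spec.1
  have hPle : P.degree ≤ Q.degree := by
    refine (Polynomial.degree_sum_le _ _).trans (Finset.sup_le fun l _ => (key l).choose_spec.2)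
  constructor
  · exact (RatFunc.denom_dvd hQ).mpr ⟨P, hrw⟩
  · intro hX
    have hXa : (RatFunc.X : RatFunc ℂ) = algebraMap (Polynomial ℂ) (RatFunc ℂ) Polynomial.X :=
      RatFunc.algebraMap_X.symm
    rw [hrw, hXa, div_eq_iff haQ, ← map_mul] at hX
    have hPQ : P = Polynomial.X * Q := RatFunc.algebraMap_injective ℂ hX
    rw [hPQ, Polynomial.degree_mul, Polynomial.degree_X,
      Polynomial.degree_eq_natDegree hQ] at hPle
    norm_cast at hPle
    omega
end
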